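/- Let K₁,…,K_m be nonnegative n×n matrices with equal off-diagonal parts, i.e., K_s(i,j) = K_t(i,j) for all i ≠ j and all s, t. Then for nonnegative α₁,…,α_m with ∑α_t = 1, r(α₁K₁ + ⋯ + α_mK_m) ≤ α₁ r(K₁) + ⋯ + α_m r(K_m). -/

import Mathlib

open scoped ENNReal
open Finset
noncomputable def specRad {n : ℕ} (A : Matrix (Fin n) (Fin n) ℝ) : ℝ≥0∞ :=
  spectralRadius ℂ (A.map (algebraMap ℝ ℂ))
noncomputable def opNorm {n : ℕ} (A : Matrix (Fin n) (Fin n) ℝ) : ℝ :=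
  ‖Matrix.toEuclideanCLM (𝕜 := ℝ) A‖

/-! ### Auxiliary lemmas -/

lemma holder_finset {ι : Type*} (s : Finset ι) {m : ℕ} (w : Fin m → ℝ) (hw : ∀ t, 0 ≤ w t)
    (hw1 : ∑ t, w t = 1) (f : Fin m → ι → ℝ) (hf : ∀ t j, 0 ≤ f t j) :
    ∑ j ∈ s, ∏ t, f t j ^ w t ≤ ∏ t, (∑ j ∈ s, f t j) ^ w t := by
  set S : Fin m → ℝ := fun t => ∑ j ∈ s, f t j with hS
  have hSnn : ∀ t, 0 ≤ S t := fun t => Finset.sum_nonneg fun j _ => hf t j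
  by_cases hz : ∃ t, w t ≠ 0 ∧ S t = 0
  · obtain ⟨t0, hw0, hS0⟩ := hz
    have hf0 : ∀ j ∈ s, f t0 j = 0 := fun j hj =>
      (Finset.sum_eq_zero_iff_of_nonneg (fun j _ => hf t0 j)).mp hS0 j hj
    have hall : ∀ j ∈ s, ∏ t, f t j ^ w t = 0 := by
      intro j hj
      refine Finset.prod_eq_zero (Finset.mem_univ t0) ?_
      rw [hf0 j hj, Real.zero_rpow hw0]
    rw [Finset.sum_congr rfl hall, Finset.sum_const, smul_zero]
    exact Finset.prod_nonneg fun t _ => Real.rpow_nonneg (hSnn t) _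
  · push_neg at hz
    have hSpos : ∀ t, w t ≠ 0 → S t ≠ 0 := hz
    have key : ∀ j ∈ s, ∏ t, f t j ^ w t ≤ (∑ t, w t * (f t j / S t)) * ∏ t, S t ^ w t := by
      intro j hj
      have e1 : ∏ t, f t j ^ w t = (∏ t, (f t j / S t) ^ w t) * ∏ t, S t ^ w t := by
        rw [← Finset.prod_mul_distrib]
        refine Finset.prod_congr rfl fun t _ => ?_
        by_cases hwt : w t = 0
        · simp [hwt]
        · rw [← Real.mul_rpow (div_nonneg (hf t j) (hSnn t)) (hSnn t),
            div_mul_cancel₀ _ (hSpos t hwt)]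
      rw [e1]
      refine mul_le_mul_of_nonneg_right ?_
        (Finset.prod_nonneg fun t _ => Real.rpow_nonneg (hSnn t) _)
      exact Real.geom_mean_le_arith_mean_weighted _ _ _ (fun t _ => hw t) hw1
        (fun t _ => div_nonneg (hf t j) (hSnn t))
    have hone : (∑ t, w t * (S t / S t)) = 1 := by
      rw [← hw1]
      refine Finset.sum_congr rfl fun t _ => ?_
      by_cases hwt : w t = 0
      · simp [hwt]
      · rw [div_self (hSpos t hwt), mul_one]
    calc ∑ j ∈ s, ∏ t, f t j ^ w t
        ≤ ∑ j ∈ s, (∑ t, w t * (f t j / S t)) * ∏ t, S t ^ w t := Finset.sum_le_sum key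
      _ = (∑ t, w t * (S t / S t)) * ∏ t, S t ^ w t := by
          rw [← Finset.sum_mul]
          congr 1
          rw [Finset.sum_comm]
          refine Finset.sum_congr rfl fun t _ => ?_
          rw [← Finset.mul_sum, ← Finset.sum_div]
      _ = ∏ t, S t ^ w t := by rw [hone, one_mul]

lemma pow_entry_nonneg {n : ℕ} (M : Matrix (Fin n) (Fin n) ℝ) (hM : ∀ i j, 0 ≤ M i j) :
    ∀ k i j, 0 ≤ (M ^ k) i j := by
  intro k
  induction k with
  | zero => intro i j; by_cases h : i = j <;> simp [pow_zero, Matrix.one_apply, h]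
  | succ k ih =>
    intro i j
    rw [pow_succ, Matrix.mul_apply]
    exact Finset.sum_nonneg fun l _ => mul_nonneg (ih i l) (hM l j)

lemma specRad_le_of_subeigen {n : ℕ} (M : Matrix (Fin n) (Fin n) ℝ)
    (hM : ∀ i j, 0 ≤ M i j) (x : Fin n → ℝ) (hx : ∀ i, 0 < x i) {lam : ℝ}
    (h : ∀ i, M.mulVec x i ≤ lam * x i) :
    specRad M ≤ ENNReal.ofReal lam := by
  rw [specRad, spectralRadius]
  refine iSup₂_le fun μ hμ => ?_
  rw [← AlgEquiv.spectrum_eq (Matrix.toLinAlgEquiv' (R := ℂ) (n := Fin n)),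
      ← Module.End.hasEigenvalue_iff_mem_spectrum] at hμ
  obtain ⟨v, hv⟩ := hμ.exists_hasEigenvector
  have hvne := hv.right
  have heig : (M.map (algebraMap ℝ ℂ)).mulVec v = μ • v := by
    rw [← Matrix.toLinAlgEquiv'_apply, hv.apply_eq_smul]
  obtain ⟨j0, hj0⟩ : ∃ j, v j ≠ 0 := by
    by_contra hc
    push_neg at hc
    exact hvne (funext hc)
  obtain ⟨i, -, hi⟩ := Finset.exists_max_image Finset.univ (fun j => ‖v j‖ / x j)
    ⟨j0, Finset.mem_univ j0⟩
  have hvi : 0 < ‖v i‖ := by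
    have h1 : 0 < ‖v j0‖ / x j0 := div_pos (norm_pos_iff.mpr hj0) (hx j0)
    have h2 := hi j0 (Finset.mem_univ j0)
    have h3 := lt_of_lt_of_le h1 h2
    by_contra hc
    push_neg at hc
    have h4 : ‖v i‖ = 0 := le_antisymm hc (norm_nonneg _)
    rw [h4, zero_div] at h3
    exact absurd h3 (lt_irrefl 0)
  have hvj : ∀ j, ‖v j‖ ≤ ‖v i‖ / x i * x j := fun j => by
    have := hi j (Finset.mem_univ j)
    rw [div_le_div_iff₀ (hx j) (hx i)] at this
    rw [div_mul_eq_mul_div, le_div_iff₀ (hx i)]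
    linarith
  have key : ‖μ‖ * ‖v i‖ ≤ lam * ‖v i‖ := by
    have e1 : μ * v i = ∑ j, (algebraMap ℝ ℂ) (M i j) * v j := by
      have := congrFun heig i
      simp only [Matrix.mulVec, dotProduct, Matrix.map_apply, Pi.smul_apply,
        smul_eq_mul] at this
      rw [← this]
    calc ‖μ‖ * ‖v i‖ = ‖μ * v i‖ := (norm_mul _ _).symm
      _ = ‖∑ j, (algebraMap ℝ ℂ) (M i j) * v j‖ := by rw [e1]
      _ ≤ ∑ j, ‖(algebraMap ℝ ℂ) (M i j) * v j‖ := norm_sum_le _ _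
      _ = ∑ j, M i j * ‖v j‖ := by
          refine Finset.sum_congr rfl fun j _ => ?_
          rw [norm_mul]
          congr 1
          rw [show (algebraMap ℝ ℂ) (M i j) = (M i j : ℂ) from rfl, Complex.norm_real,
            Real.norm_eq_abs, abs_of_nonneg (hM i j)]
      _ ≤ ∑ j, M i j * (‖v i‖ / x i * x j) := by
          refine Finset.sum_le_sum fun j _ => mul_le_mul_of_nonneg_left (hvj j) (hM i j)
      _ = ‖v i‖ / x i * M.mulVec x i := by
          simp only [Matrix.mulVec, dotProduct, Finset.mul_sum]
          exact Finset.sum_congr rfl fun j _ => by ring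
      _ ≤ ‖v i‖ / x i * (lam * x i) := by
          refine mul_le_mul_of_nonneg_left (h i) (div_nonneg (norm_nonneg _) (hx i).le)
      _ = lam * ‖v i‖ := by
          have hne : x i ≠ 0 := (hx i).ne'
          field_simp
  have hfin : ‖μ‖ ≤ lam := le_of_mul_le_mul_right key hvi
  calc (‖μ‖₊ : ℝ≥0∞) = ENNReal.ofReal ‖μ‖ := (ofReal_norm μ).symm
    _ ≤ ENNReal.ofReal lam := ENNReal.ofReal_le_ofReal hfin

lemma specRad_zero_dim (A : Matrix (Fin 0) (Fin 0) ℝ) : specRad A = 0 := by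
  haveI : Subsingleton (Matrix (Fin 0) (Fin 0) ℂ) :=
    ⟨fun a b => by ext i; exact i.elim0⟩
  have hemp : ∀ μ : ℂ, μ ∉ spectrum ℂ (A.map (algebraMap ℝ ℂ)) := by
    intro μ hμ
    rw [spectrum.mem_iff] at hμ
    exact hμ (isUnit_of_subsingleton _)
  rw [specRad, spectralRadius]
  refine le_antisymm (iSup₂_le fun μ hμ => absurd hμ (hemp μ)) zero_le

section PowerBound
attribute [local instance] Matrix.linftyOpNormedRing Matrix.linftyOpNormedAlgebra

instance matCS {n : ℕ} : CompleteSpace (Matrix (Fin n) (Fin n) ℂ) :=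
  (inferInstance : CompleteSpace (Fin n → Fin n → ℂ))

lemma specRad_lt_top {n : ℕ} (hn : 0 < n) (A : Matrix (Fin n) (Fin n) ℝ) : specRad A < ⊤ := by
  haveI : Nonempty (Fin n) := ⟨⟨0, hn⟩⟩
  show spectralRadius ℂ (A.map (algebraMap ℝ ℂ)) < ⊤
  exact lt_of_le_of_lt
    (spectrum.spectralRadius_le_nnnorm (𝕜 := ℂ) (A.map (algebraMap ℝ ℂ))) ENNReal.coe_lt_top

lemma exists_pow_lt' {n : ℕ} (A : Matrix (Fin n) (Fin n) ℂ) {lam : ℝ} (hlam : 0 < lam)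
    (h : spectralRadius ℂ A < ENNReal.ofReal lam) : ∃ N, 1 ≤ N ∧ ‖A ^ N‖ < lam ^ N := by
  have hT := spectrum.pow_nnnorm_pow_one_div_tendsto_nhds_spectralRadius A
  have hev : ∀ᶠ N : ℕ in Filter.atTop,
      (‖A ^ N‖₊ : ℝ≥0∞) ^ (1 / (N : ℝ)) < ENNReal.ofReal lam :=
    hT.eventually_lt_const h
  obtain ⟨N, hN, hN1⟩ := (hev.and (Filter.eventually_ge_atTop 1)).exists
  refine ⟨N, hN1, ?_⟩
  have hNne : (N : ℝ) ≠ 0 := Nat.cast_ne_zero.mpr (by omega)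
  have h2 := ENNReal.rpow_lt_rpow hN
    (show (0:ℝ) < (N:ℝ) by exact_mod_cast Nat.pos_of_ne_zero (by omega))
  rw [← ENNReal.rpow_mul, one_div, inv_mul_cancel₀ hNne, ENNReal.rpow_one] at h2
  rw [show ((N:ℝ)) = ((N:ℕ):ℝ) from rfl, ENNReal.rpow_natCast,
      ← ENNReal.ofReal_pow hlam.le, ← enorm_eq_nnnorm, ← ofReal_norm] at h2
  exact (ENNReal.ofReal_lt_ofReal_iff (by positivity)).mp h2

lemma exists_pos_subeigen {n : ℕ} (M : Matrix (Fin n) (Fin n) ℝ) (hM : ∀ i j, 0 ≤ M i j)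
    {lam : ℝ} (hlam : 0 < lam) (h : specRad M < ENNReal.ofReal lam) :
    ∃ x : Fin n → ℝ, (∀ i, 0 < x i) ∧ ∀ i, M.mulVec x i ≤ lam * x i := by
  obtain ⟨N, hN1, hN⟩ := exists_pow_lt' (M.map (algebraMap ℝ ℂ)) hlam h
  have hmap : ∀ k : ℕ, (M.map (algebraMap ℝ ℂ)) ^ k = (M ^ k).map (algebraMap ℝ ℂ) := by
    intro k
    simp only [← RingHom.mapMatrix_apply, map_pow]
  set A : Matrix (Fin n) (Fin n) ℂ := (M.map (algebraMap ℝ ℂ)) ^ N with hA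
  have hrow : ∀ i, ∑ j, (M ^ N) i j < lam ^ N := by
    intro i
    have h1 : (∑ j, ‖A i j‖₊) ≤ ‖A‖₊ := by
      calc (∑ j, ‖A i j‖₊) ≤ Finset.univ.sup (fun i => ∑ j, ‖A i j‖₊) :=
            Finset.le_sup (f := fun i => ∑ j, ‖A i j‖₊) (Finset.mem_univ i)
        _ = ‖A‖₊ := (Matrix.linfty_opNNNorm_def A).symm
    have h1' : ∑ j, ‖A i j‖ ≤ ‖A‖ := by
      have := NNReal.coe_le_coe.mpr h1
      push_cast at this
      simpa using this
    have h2 : ∀ j, (M ^ N) i j = ‖A i j‖ := by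
      intro j
      rw [hA, hmap N]
      simp only [Matrix.map_apply]
      rw [show (algebraMap ℝ ℂ) ((M ^ N) i j) = ((M ^ N) i j : ℂ) from rfl, Complex.norm_real,
        Real.norm_eq_abs, abs_of_nonneg (pow_entry_nonneg M hM N i j)]
    calc ∑ j, (M ^ N) i j = ∑ j, ‖A i j‖ := Finset.sum_congr rfl fun j _ => h2 j
      _ ≤ ‖A‖ := h1'
      _ < lam ^ N := hN
  set e : Fin n → ℝ := fun _ => 1 with he
  set x : Fin n → ℝ := ∑ k ∈ Finset.range N, lam⁻¹ ^ k • ((M ^ k).mulVec e) with hx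
  have ha : ∀ k i, (M ^ k).mulVec e i = ∑ j, (M ^ k) i j := by
    intro k i; simp [Matrix.mulVec, dotProduct, he]
  have hanonneg : ∀ k i, 0 ≤ (M ^ k).mulVec e i := by
    intro k i
    rw [ha]
    exact Finset.sum_nonneg fun j _ => pow_entry_nonneg M hM k i j
  have hxpos : ∀ i, 0 < x i := by
    intro i
    have h0 : (fun k => lam⁻¹ ^ k • ((M ^ k).mulVec e)) 0 i = 1 := by
      simp [pow_zero, Matrix.one_mulVec, he]
    have : (1:ℝ) ≤ x i := by
      rw [hx]
      have := Finset.single_le_sum (f := fun k => (lam⁻¹ ^ k • ((M ^ k).mulVec e)) i)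
        (fun k _ => by
          simp only [Pi.smul_apply, smul_eq_mul]
          exact mul_nonneg (by positivity) (hanonneg k i))
        (Finset.mem_range.mpr (by omega : 0 < N))
      simpa [h0] using this
    linarith
  refine ⟨x, hxpos, fun i => ?_⟩
  have hMx : M.mulVec x = ∑ k ∈ Finset.range N, lam⁻¹ ^ k • ((M ^ (k+1)).mulVec e) := by
    rw [hx, ← Matrix.mulVecLin_apply, map_sum]
    refine Finset.sum_congr rfl fun k _ => ?_
    rw [map_smul]
    congr 1
    rw [Matrix.mulVecLin_apply, Matrix.mulVec_mulVec, ← pow_succ']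
  set g : ℕ → ℝ := fun k => lam⁻¹ ^ k * ((M ^ k).mulVec e i) with hg
  have hx_i : x i = ∑ k ∈ Finset.range N, g k := by
    rw [hx]; simp [hg]
  have hMx_i : M.mulVec x i = lam * ∑ k ∈ Finset.range N, g (k+1) := by
    rw [hMx]
    simp only [Finset.sum_apply, Pi.smul_apply, smul_eq_mul, Finset.mul_sum, hg]
    refine Finset.sum_congr rfl fun k _ => ?_
    field_simp
    linear_combination (-(lam⁻¹ ^ k * (M ^ (k+1)).mulVec e i)) * mul_inv_cancel₀ hlam.ne'
  have htel : ∑ k ∈ Finset.range N, g k - ∑ k ∈ Finset.range N, g (k+1)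
      = g 0 - g N := by
    rw [← Finset.sum_sub_distrib, Finset.sum_range_sub' g N]
  have hg0 : g 0 = 1 := by simp [hg, Matrix.one_mulVec, he]
  have hgN : g N ≤ 1 := by
    show lam⁻¹ ^ N * ((M ^ N).mulVec e i) ≤ 1
    rw [ha]
    have h3 : lam⁻¹ ^ N * (∑ j, (M ^ N) i j) ≤ lam⁻¹ ^ N * lam ^ N :=
      mul_le_mul_of_nonneg_left (hrow i).le (by positivity)
    calc lam⁻¹ ^ N * (∑ j, (M ^ N) i j) ≤ lam⁻¹ ^ N * lam ^ N := h3
      _ = 1 := by rw [← mul_pow, inv_mul_cancel₀ hlam.ne', one_pow]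
  have hdiff : lam * x i - M.mulVec x i = lam * (g 0 - g N) := by
    rw [hx_i, hMx_i, ← mul_sub, htel]
  nlinarith [hg0, hgN, hdiff, hlam]

end PowerBound

theorem stmt6 {n m : ℕ} (K : Fin m → Matrix (Fin n) (Fin n) ℝ)
    (hK : ∀ t i j, 0 ≤ K t i j)
    (hoff : ∀ s t : Fin m, ∀ i j : Fin n, i ≠ j → K s i j = K t i j)
    (α : Fin m → ℝ) (hα : ∀ t, 0 ≤ α t) (hsum : ∑ t, α t = 1) :
    specRad (∑ t, α t • K t) ≤ ∑ t, ENNReal.ofReal (α t) * specRad (K t) := by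
  rcases Nat.eq_zero_or_pos n with hn | hn
  · subst hn
    rw [specRad_zero_dim]
    exact zero_le
  have hm : 0 < m := by
    by_contra hmc
    push_neg at hmc
    have : m = 0 := by omega
    subst this
    simp at hsum
  set t0 : Fin m := ⟨0, hm⟩ with ht0
  set M := ∑ t, α t • K t with hM
  have hMent : ∀ i j, M i j = ∑ t, α t * K t i j := by
    intro i j
    rw [hM]
    simp [Matrix.sum_apply, Matrix.smul_apply, smul_eq_mul]
  have hMnn : ∀ i j, 0 ≤ M i j := by
    intro i j
    rw [hMent]
    exact Finset.sum_nonneg fun t _ => mul_nonneg (hα t) (hK t i j)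
  refine ENNReal.le_of_forall_pos_le_add fun ε hε hfin => ?_
  have hrfin : ∀ t, specRad (K t) ≠ ⊤ := fun t => (specRad_lt_top hn (K t)).ne
  set lam : Fin m → ℝ := fun t => (specRad (K t)).toReal + ε with hlam
  have hεpos : (0:ℝ) < ε := hε
  have hlampos : ∀ t, 0 < lam t := fun t => by
    have h1 := ENNReal.toReal_nonneg (a := specRad (K t))
    rw [hlam]
    positivity
  have hrt : ∀ t, specRad (K t) < ENNReal.ofReal (lam t) := by
    intro t
    rw [ENNReal.lt_ofReal_iff_toReal_lt (hrfin t), hlam]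
    simpa using hεpos
  choose x hxpos hxsub using fun t => exists_pos_subeigen (K t) (hK t) (hlampos t) (hrt t)
  set y : Fin n → ℝ := fun i => ∏ t, x t i ^ α t with hy
  have hypos : ∀ i, 0 < y i := fun i =>
    Finset.prod_pos fun t _ => Real.rpow_pos_of_pos (hxpos t i) _
  -- diagonal entries are below lam
  have hdiag_le : ∀ t i, K t i i ≤ lam t := by
    intro t i
    have h1 : K t i i * x t i ≤ (K t).mulVec (x t) i := by
      rw [Matrix.mulVec, dotProduct]
      exact Finset.single_le_sum (f := fun j => K t i j * x t j)
        (fun j _ => mul_nonneg (hK t i j) (hxpos t j).le) (Finset.mem_univ i)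
    have h2 := le_trans h1 (hxsub t i)
    exact le_of_mul_le_mul_right h2 (hxpos t i)
  -- the key subeigenvector inequality for y
  have key : ∀ i, M.mulVec y i ≤ (∑ t, α t * lam t) * y i := by
    intro i
    have hsplit : M.mulVec y i
        = (∑ t, α t * K t i i) * y i + ∑ j ∈ Finset.univ.erase i, K t0 i j * y j := by
      rw [Matrix.mulVec, dotProduct, ← Finset.add_sum_erase _ _ (Finset.mem_univ i)]
      congr 1
      · rw [hMent]
      · refine Finset.sum_congr rfl fun j hj => ?_
        have hji : j ≠ i := Finset.ne_of_mem_erase hj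
        have hMij : M i j = K t0 i j := by
          rw [hMent,
            Finset.sum_congr rfl fun t _ => by rw [hoff t t0 i j (Ne.symm hji)],
            ← Finset.sum_mul, hsum, one_mul]
        rw [hMij]
    -- rewrite each off-diagonal term as a product
    have hterm : ∀ j ∈ Finset.univ.erase i, K t0 i j * y j
        = ∏ t, (K t i j * x t j) ^ α t := by
      intro j hj
      have hji : j ≠ i := Finset.ne_of_mem_erase hj
      have hc : ∏ t, (K t0 i j : ℝ) ^ α t = K t0 i j :=
        Real.geom_mean_weighted_of_constant Finset.univ α (fun _ => K t0 i j) (K t0 i j)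
          (fun t _ => hα t) hsum (fun t _ => hK t0 i j) (fun t _ _ => rfl)
      calc K t0 i j * y j = (∏ t, (K t0 i j : ℝ) ^ α t) * ∏ t, x t j ^ α t := by
            rw [hc]
        _ = ∏ t, (K t0 i j * x t j) ^ α t := by
            rw [← Finset.prod_mul_distrib]
            exact Finset.prod_congr rfl fun t _ =>
              (Real.mul_rpow (hK t0 i j) (hxpos t j).le).symm
        _ = ∏ t, (K t i j * x t j) ^ α t := by
            exact Finset.prod_congr rfl fun t _ => by rw [hoff t0 t i j (Ne.symm hji)]
    -- bound the off-diagonal row sums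
    have hoffsum : ∀ t, ∑ j ∈ Finset.univ.erase i, K t i j * x t j
        ≤ (lam t - K t i i) * x t i := by
      intro t
      have h1 : K t i i * x t i + ∑ j ∈ Finset.univ.erase i, K t i j * x t j
          = (K t).mulVec (x t) i := by
        rw [Matrix.mulVec, dotProduct, ← Finset.add_sum_erase _ _ (Finset.mem_univ i)]
      have h2 := hxsub t i
      have h3 : K t i i * x t i + ∑ j ∈ Finset.univ.erase i, K t i j * x t j
          ≤ lam t * x t i := by rw [h1]; exact h2
      nlinarith [h3]
    have hoffsum_nn : ∀ t, (0:ℝ) ≤ ∑ j ∈ Finset.univ.erase i, K t i j * x t j := fun t =>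
      Finset.sum_nonneg fun j _ => mul_nonneg (hK t i j) (hxpos t j).le
    have hbase_nn : ∀ t, (0:ℝ) ≤ (lam t - K t i i) * x t i := fun t =>
      mul_nonneg (by linarith [hdiag_le t i]) (hxpos t i).le
    have hholder : ∑ j ∈ Finset.univ.erase i, ∏ t, (K t i j * x t j) ^ α t
        ≤ ∏ t, ((lam t - K t i i) * x t i) ^ α t := by
      calc ∑ j ∈ Finset.univ.erase i, ∏ t, (K t i j * x t j) ^ α t
          ≤ ∏ t, (∑ j ∈ Finset.univ.erase i, K t i j * x t j) ^ α t :=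
            holder_finset _ α hα hsum (fun t j => K t i j * x t j)
              (fun t j => mul_nonneg (hK t i j) (hxpos t j).le)
        _ ≤ ∏ t, ((lam t - K t i i) * x t i) ^ α t := by
            refine Finset.prod_le_prod (fun t _ => Real.rpow_nonneg (hoffsum_nn t) _)
              (fun t _ => Real.rpow_le_rpow (hoffsum_nn t) (hoffsum t) (hα t))
    have hfactor : ∏ t, ((lam t - K t i i) * x t i) ^ α t
        = (∏ t, (lam t - K t i i) ^ α t) * y i := by
      rw [hy, ← Finset.prod_mul_distrib]
      exact Finset.prod_congr rfl fun t _ =>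
        Real.mul_rpow (by linarith [hdiag_le t i]) (hxpos t i).le
    have hamgm : ∏ t, (lam t - K t i i) ^ α t ≤ ∑ t, α t * (lam t - K t i i) :=
      Real.geom_mean_le_arith_mean_weighted _ _ _ (fun t _ => hα t) hsum
        (fun t _ => by linarith [hdiag_le t i])
    calc M.mulVec y i
        = (∑ t, α t * K t i i) * y i + ∑ j ∈ Finset.univ.erase i, K t0 i j * y j := hsplit
      _ = (∑ t, α t * K t i i) * y i
            + ∑ j ∈ Finset.univ.erase i, ∏ t, (K t i j * x t j) ^ α t := by
          rw [Finset.sum_congr rfl hterm]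
      _ ≤ (∑ t, α t * K t i i) * y i + (∏ t, (lam t - K t i i) ^ α t) * y i := by
          rw [← hfactor]
          exact add_le_add_right hholder _
      _ ≤ (∑ t, α t * K t i i) * y i + (∑ t, α t * (lam t - K t i i)) * y i := by
          exact add_le_add_right (mul_le_mul_of_nonneg_right hamgm (hypos i).le) _
      _ = (∑ t, α t * lam t) * y i := by
          rw [← add_mul, ← Finset.sum_add_distrib]
          congr 1
          refine Finset.sum_congr rfl fun t _ => by ring
  have hle := specRad_le_of_subeigen M hMnn y hypos key
  -- convert the bound to the required form
  have hconv : ENNReal.ofReal (∑ t, α t * lam t)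
      = ∑ t, ENNReal.ofReal (α t) * specRad (K t) + (∑ t, ENNReal.ofReal (α t)) * ε := by
    rw [ENNReal.ofReal_sum_of_nonneg (fun t _ => mul_nonneg (hα t) (hlampos t).le)]
    have hterm : ∀ t, ENNReal.ofReal (α t * lam t)
        = ENNReal.ofReal (α t) * specRad (K t) + ENNReal.ofReal (α t) * ε := by
      intro t
      rw [ENNReal.ofReal_mul (hα t), hlam]
      have : ENNReal.ofReal ((specRad (K t)).toReal + (ε:ℝ))
          = specRad (K t) + (ε : ℝ≥0∞) := by
        rw [ENNReal.ofReal_add ENNReal.toReal_nonneg (by positivity),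
          ENNReal.ofReal_toReal (hrfin t), ENNReal.ofReal_coe_nnreal]
      rw [this, mul_add]
    rw [Finset.sum_congr rfl fun t _ => hterm t, Finset.sum_add_distrib, ← Finset.sum_mul]
  have hsum1 : (∑ t, ENNReal.ofReal (α t)) = 1 := by
    rw [← ENNReal.ofReal_sum_of_nonneg (fun t _ => hα t), hsum, ENNReal.ofReal_one]
  calc specRad M ≤ ENNReal.ofReal (∑ t, α t * lam t) := hle
    _ = ∑ t, ENNReal.ofReal (α t) * specRad (K t) + (∑ t, ENNReal.ofReal (α t)) * ε := hconv
    _ = ∑ t, ENNReal.ofReal (α t) * specRad (K t) + ε := by rw [hsum1, one_mul]
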